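/- Let c > 0, A, B ∈ ℝ and suppose h : ℝ → ℝ is C², h'(s) → 0 and h(s)/s → 0 as s → ∞, and h satisfies the two-sided differential inequality (a₄−ε)/s ≤ h'' + (2cs + A h + B)h' ≤ (a₄+ε)/s for all s ≥ s₁, for some a₄ ∈ ℝ, ε > 0, s₁ > 0. Then for all sufficiently large s, (a₄−ε)/(2c) − δ(s) ≤ s² h'(s) ≤ (a₄+ε)/(2c) + δ(s) where δ(s) → 0 as s → ∞. -/

import Mathlib

open Filter Real

private lemma barrier {φ : ℝ → ℝ} (hφ : Differentiable ℝ φ) {M K a : ℝ} (hK : 0 < K)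
    (H : ∀ s, a ≤ s → M ≤ φ s → deriv φ s ≤ -K) :
    ∀ᶠ t in atTop, φ t ≤ M := by
  have hψ : ∀ s : ℝ, HasDerivAt (fun y => φ y + K * y) (deriv φ s + K) s := by
    intro s
    exact ((hφ s).hasDerivAt.add ((hasDerivAt_id s).const_mul K)).congr_deriv (by ring)
  obtain ⟨t₁, ht₁a, ht₁⟩ : ∃ t₁, a ≤ t₁ ∧ φ t₁ ≤ M := by
    by_contra hcon
    push_neg at hcon
    have hfa : M < φ a := hcon a le_rfl
    set b := a + (φ a - M) / K + 1 with hb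
    have hdiv : 0 < (φ a - M) / K := div_pos (by linarith) hK
    have hab : a ≤ b := by simp only [hb]; linarith
    have hanti : AntitoneOn (fun s => φ s + K * s) (Set.Icc a b) := by
      apply antitoneOn_of_deriv_nonpos (convex_Icc a b)
      · exact (hφ.continuous.add (continuous_const.mul continuous_id)).continuousOn
      · intro s _
        exact ((hψ s).differentiableAt).differentiableWithinAt
      · intro s hs
        rw [interior_Icc] at hs
        rw [(hψ s).deriv]
        have := H s hs.1.le (hcon s hs.1.le).le
        linarith
    have hba := hanti (Set.left_mem_Icc.mpr hab) (Set.right_mem_Icc.mpr hab) hab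
    simp only at hba
    have hKb : K * ((φ a - M) / K) = φ a - M := mul_div_cancel₀ _ hK.ne'
    have hfb : M < φ b := hcon b hab
    have hKb2 : K * b = K * a + (φ a - M) + K := by
      rw [hb, mul_add, mul_add, hKb, mul_one]
    linarith
  filter_upwards [eventually_ge_atTop t₁] with t ht
  by_contra hMt
  push_neg at hMt
  have ht₁t : t₁ < t := lt_of_le_of_ne ht (fun he => by rw [he] at ht₁; linarith)
  set S := {s ∈ Set.Icc t₁ t | φ s ≤ M} with hSdef
  have hSne : S.Nonempty := ⟨t₁, ⟨le_rfl, ht⟩, ht₁⟩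
  have hSbdd : BddAbove S := ⟨t, fun s hs => hs.1.2⟩
  have hScl : IsClosed S := isClosed_Icc.inter (isClosed_le hφ.continuous continuous_const)
  have huS : sSup S ∈ S := hScl.csSup_mem hSne hSbdd
  set u := sSup S
  have hut : u < t := lt_of_le_of_ne huS.1.2 (fun he => by
    have := huS.2; rw [he] at this; linarith)
  have hgt : ∀ s ∈ Set.Ioo u t, M < φ s := by
    intro s hs
    by_contra hle
    push_neg at hle
    have hsS : s ∈ S := ⟨⟨le_trans huS.1.1 hs.1.le, hs.2.le⟩, hle⟩
    exact absurd (le_csSup hSbdd hsS) (not_le.mpr hs.1)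
  have hSA : StrictAntiOn φ (Set.Icc u t) := by
    apply strictAntiOn_of_deriv_neg (convex_Icc u t) hφ.continuous.continuousOn
    intro s hs
    rw [interior_Icc] at hs
    have has : a ≤ s := le_trans (le_trans ht₁a huS.1.1) hs.1.le
    have := H s has (hgt s hs).le
    linarith
  have := hSA (Set.left_mem_Icc.mpr hut.le) (Set.right_mem_Icc.mpr hut.le) hut
  linarith [huS.2]
private lemma upper (c A B a s₁ : ℝ) (hc : 0 < c) (hs₁ : 0 < s₁)
    (h : ℝ → ℝ) (hh : ContDiff ℝ 2 h)
    (hhs : Tendsto (fun s => h s / s) atTop (nhds 0))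
    (hineq : ∀ s, s₁ ≤ s →
      deriv (deriv h) s + (2 * c * s + A * h s + B) * deriv h s ≤ a / s)
    {δ₀ : ℝ} (hδ₀ : 0 < δ₀) :
    ∀ᶠ s in atTop, s ^ 2 * deriv h s ≤ a / (2 * c) + δ₀ := by
  have hh2 : ContDiff ℝ ((1 : ℕ) + 1) h := by exact_mod_cast hh
  have hgd : Differentiable ℝ (deriv h) :=
    (contDiff_succ_iff_deriv.mp hh2).2.2.differentiable (by simp)
  have hx : Differentiable ℝ (fun s : ℝ => s ^ 2 * deriv h s) :=
    (differentiable_pow 2).mul hgd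
  have hxderiv : ∀ s : ℝ, deriv (fun y : ℝ => y ^ 2 * deriv h y) s
      = 2 * s * deriv h s + s ^ 2 * deriv (deriv h) s := by
    intro s
    have h1 : HasDerivAt (fun y : ℝ => y ^ 2) (2 * s) s := by
      simpa using hasDerivAt_pow 2 s
    have h2 : HasDerivAt (deriv h) (deriv (deriv h) s) s := (hgd s).hasDerivAt
    exact (h1.mul h2).deriv
  obtain ⟨M, hM⟩ : ∃ M : ℝ, M = a / (2 * c) + δ₀ := ⟨_, rfl⟩
  obtain ⟨η, hη⟩ : ∃ η : ℝ, η = c * δ₀ / (|M| + δ₀ + 1) := ⟨_, rfl⟩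
  have hηpos : 0 < η := by rw [hη]; positivity
  have hηc : η < c := by
    rw [hη, div_lt_iff₀ (by positivity)]
    nlinarith [abs_nonneg M]
  have hηM : η * |M| ≤ c * δ₀ := by
    rw [hη, div_mul_eq_mul_div, div_le_iff₀ (by positivity)]
    nlinarith [abs_nonneg M, mul_pos hc hδ₀]
  have hw : Tendsto (fun s : ℝ => (2 * c * s + A * h s + B - 2 / s) / s)
      atTop (nhds (2 * c)) := by
    have h1 : Tendsto (fun s : ℝ => 2 * c + A * (h s / s) + B * s⁻¹ - 2 * (s⁻¹ * s⁻¹))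
        atTop (nhds (2 * c + A * 0 + B * 0 - 2 * (0 * 0))) :=
      (((tendsto_const_nhds.add (hhs.const_mul A)).add
        (tendsto_inv_atTop_zero.const_mul B))).sub
        ((tendsto_inv_atTop_zero.mul tendsto_inv_atTop_zero).const_mul 2)
    have h2 : (fun s : ℝ => 2 * c + A * (h s / s) + B * s⁻¹ - 2 * (s⁻¹ * s⁻¹))
        =ᶠ[atTop] fun s : ℝ => (2 * c * s + A * h s + B - 2 / s) / s := by
      filter_upwards [eventually_ge_atTop (1 : ℝ)] with s hs
      have hs0 : s ≠ 0 := by linarith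
      field_simp
    simpa using h1.congr' h2
  have hrbound : ∀ᶠ s in atTop,
      (2 * c - η) * s ≤ 2 * c * s + A * h s + B - 2 / s ∧
      2 * c * s + A * h s + B - 2 / s ≤ (2 * c + η) * s := by
    have := Metric.tendsto_nhds.mp hw η hηpos
    filter_upwards [this, eventually_ge_atTop (1 : ℝ)] with s hs hs1
    rw [Real.dist_eq, abs_lt] at hs
    have hs0 : (0 : ℝ) < s := by linarith
    constructor
    · have := (le_div_iff₀ hs0).mp
        (by linarith : 2 * c - η ≤ (2 * c * s + A * h s + B - 2 / s) / s)
      linarith [this]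
    · have := (div_le_iff₀ hs0).mp
        (by linarith : (2 * c * s + A * h s + B - 2 / s) / s ≤ 2 * c + η)
      linarith [this]
  rw [eventually_atTop] at hrbound
  obtain ⟨S₀, hS₀⟩ := hrbound
  obtain ⟨S, hS⟩ : ∃ S : ℝ, S = max (max S₀ s₁) 1 := ⟨_, rfl⟩
  have hSpos : (0 : ℝ) < S := by
    rw [hS]; exact lt_of_lt_of_le one_pos (le_max_right _ _)
  have hKpos : 0 < S * (c * δ₀) := mul_pos hSpos (mul_pos hc hδ₀)
  have Hbar : ∀ s, S ≤ s → M ≤ s ^ 2 * deriv h s →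
      deriv (fun y : ℝ => y ^ 2 * deriv h y) s ≤ -(S * (c * δ₀)) := by
    intro s hs hMx
    have hs1 : s₁ ≤ s := by
      rw [hS] at hs
      exact le_trans (le_trans (le_max_right S₀ s₁) (le_max_left _ _)) hs
    have hsS₀ : S₀ ≤ s := by
      rw [hS] at hs
      exact le_trans (le_trans (le_max_left S₀ s₁) (le_max_left _ _)) hs
    have hs0 : (0 : ℝ) < s := lt_of_lt_of_le hSpos hs
    obtain ⟨hr1, hr2⟩ := hS₀ s hsS₀
    obtain ⟨r, hr⟩ : ∃ r : ℝ, r = 2 * c * s + A * h s + B - 2 / s := ⟨_, rfl⟩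
    rw [← hr] at hr1 hr2
    have hrpos : 0 < r := by
      have hcs : 0 < (2 * c - η) * s :=
        mul_pos (by linarith) hs0
      linarith
    rw [hxderiv s]
    have hq := hineq s hs1
    have hq2 : s ^ 2 * (deriv (deriv h) s + (2 * c * s + A * h s + B) * deriv h s) ≤ a * s := by
      have h1 := mul_le_mul_of_nonneg_left hq (sq_nonneg s)
      have h2 : s ^ 2 * (a / s) = a * s := by field_simp
      linarith
    have hid : 2 * s * deriv h s + s ^ 2 * deriv (deriv h) s
        = s ^ 2 * (deriv (deriv h) s + (2 * c * s + A * h s + B) * deriv h s)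
          - r * (s ^ 2 * deriv h s) := by
      rw [hr]
      field_simp
      ring
    have hrM : r * M ≤ r * (s ^ 2 * deriv h s) := mul_le_mul_of_nonneg_left hMx hrpos.le
    have hrM2 : 2 * c * s * M - η * s * |M| ≤ r * M := by
      rcases le_or_gt 0 M with hM0 | hM0
      · have h1 : (2 * c - η) * s * M ≤ r * M :=
          mul_le_mul_of_nonneg_right hr1 hM0
        rw [abs_of_nonneg hM0]
        nlinarith
      · have h0 : 0 ≤ ((2 * c + η) * s - r) * (-M) :=
          mul_nonneg (by linarith) (by linarith)
        rw [abs_of_neg hM0]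
        nlinarith
    have h2cM : 2 * c * M = a + 2 * c * δ₀ := by
      rw [hM]
      field_simp
    have hsplit : 2 * c * s * M = s * a + 2 * c * δ₀ * s := by
      calc 2 * c * s * M = s * (2 * c * M) := by ring
        _ = s * (a + 2 * c * δ₀) := by rw [h2cM]
        _ = s * a + 2 * c * δ₀ * s := by ring
    have hfin : 2 * s * deriv h s + s ^ 2 * deriv (deriv h) s
        ≤ η * s * |M| - 2 * c * δ₀ * s := by
      rw [hid]
      linarith
    have hstep : η * s * |M| - 2 * c * δ₀ * s ≤ -(S * (c * δ₀)) := by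
      have h1 : η * s * |M| ≤ c * δ₀ * s := by
        have := mul_le_mul_of_nonneg_right hηM hs0.le
        linarith
      have h3 : S * (c * δ₀) ≤ s * (c * δ₀) :=
        mul_le_mul_of_nonneg_right hs (mul_pos hc hδ₀).le
      linarith
    linarith
  have key := barrier hx hKpos Hbar
  filter_upwards [key] with s hs
  rw [← hM]
  exact hs
theorem stmt_15 (c A B a₄ ε s₁ : ℝ) (hc : 0 < c) (hε : 0 < ε) (hs₁ : 0 < s₁)
    (h : ℝ → ℝ) (hh : ContDiff ℝ 2 h)
    (hh' : Tendsto (deriv h) atTop (nhds 0))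
    (hhs : Tendsto (fun s => h s / s) atTop (nhds 0))
    (hineq : ∀ s, s₁ ≤ s →
      (a₄ - ε) / s ≤ deriv (deriv h) s + (2 * c * s + A * h s + B) * deriv h s ∧
      deriv (deriv h) s + (2 * c * s + A * h s + B) * deriv h s ≤ (a₄ + ε) / s) :
    ∃ δ : ℝ → ℝ, Tendsto δ atTop (nhds 0) ∧
      ∀ᶠ s in atTop,
        (a₄ - ε) / (2 * c) - δ s ≤ s ^ 2 * deriv h s ∧
        s ^ 2 * deriv h s ≤ (a₄ + ε) / (2 * c) + δ s := by
  have hupper : ∀ δ₀ : ℝ, 0 < δ₀ →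
      ∀ᶠ s in atTop, s ^ 2 * deriv h s ≤ (a₄ + ε) / (2 * c) + δ₀ :=
    fun δ₀ hδ₀ =>
      upper c A B (a₄ + ε) s₁ hc hs₁ h hh hhs (fun s hs => (hineq s hs).2) hδ₀
  have hlower : ∀ δ₀ : ℝ, 0 < δ₀ →
      ∀ᶠ s in atTop, (a₄ - ε) / (2 * c) - δ₀ ≤ s ^ 2 * deriv h s := by
    intro δ₀ hδ₀
    have hneg : ContDiff ℝ 2 (fun s => -h s) := hh.neg
    have hd1 : deriv (fun s => -h s) = fun s => -deriv h s := funext fun s => deriv.neg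
    have hd2 : deriv (deriv (fun s => -h s)) = fun s => -deriv (deriv h) s := by
      rw [hd1]; exact funext fun s => deriv.neg
    have hhs' : Tendsto (fun s => (fun s => -h s) s / s) atTop (nhds 0) := by
      simpa [neg_div] using hhs.neg
    have hineq' : ∀ s, s₁ ≤ s →
        deriv (deriv (fun s => -h s)) s
          + (2 * c * s + (-A) * (fun s => -h s) s + B) * deriv (fun s => -h s) s
          ≤ (-(a₄ - ε)) / s := by
      intro s hs
      have hd2' : deriv (fun s => -deriv h s) = fun s => -deriv (deriv h) s :=
        funext fun s => deriv.neg
      simp only [hd1, hd2, hd2']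
      have h1 := (hineq s hs).1
      have h2 : (-(a₄ - ε)) / s = -((a₄ - ε) / s) := by rw [neg_div]
      rw [h2]
      have h3 : -deriv (deriv h) s + (2 * c * s + -A * -h s + B) * -deriv h s
          = -(deriv (deriv h) s + (2 * c * s + A * h s + B) * deriv h s) := by ring
      rw [h3]
      linarith
    have hup := upper c (-A) B (-(a₄ - ε)) s₁ hc hs₁ (fun s => -h s) hneg hhs' hineq' hδ₀
    filter_upwards [hup] with s hs
    simp only [hd1] at hs
    have h2 : (-(a₄ - ε)) / (2 * c) = -((a₄ - ε) / (2 * c)) := by rw [neg_div]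
    rw [h2] at hs
    have h3 : s ^ 2 * -deriv h s = -(s ^ 2 * deriv h s) := by ring
    rw [h3] at hs
    linarith
  refine ⟨fun s => max 0 (max ((a₄ - ε) / (2 * c) - s ^ 2 * deriv h s)
      (s ^ 2 * deriv h s - (a₄ + ε) / (2 * c))), ?_, ?_⟩
  · rw [Metric.tendsto_nhds]
    intro ε' hε'
    filter_upwards [hupper (ε' / 2) (by linarith), hlower (ε' / 2) (by linarith)]
      with s h1 h2
    rw [Real.dist_eq, sub_zero, abs_lt]
    constructor
    · have h0 : (0 : ℝ) ≤ max 0 (max ((a₄ - ε) / (2 * c) - s ^ 2 * deriv h s)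
          (s ^ 2 * deriv h s - (a₄ + ε) / (2 * c))) := le_max_left _ _
      linarith
    · have m1 : (a₄ - ε) / (2 * c) - s ^ 2 * deriv h s ≤ ε' / 2 := by linarith
      have m2 : s ^ 2 * deriv h s - (a₄ + ε) / (2 * c) ≤ ε' / 2 := by linarith
      have m3 : max 0 (max ((a₄ - ε) / (2 * c) - s ^ 2 * deriv h s)
          (s ^ 2 * deriv h s - (a₄ + ε) / (2 * c))) ≤ ε' / 2 :=
        max_le (by linarith) (max_le m1 m2)
      linarith
  · apply Filter.Eventually.of_forall
    intro s
    constructor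
    · have := le_trans (le_max_left ((a₄ - ε) / (2 * c) - s ^ 2 * deriv h s)
        (s ^ 2 * deriv h s - (a₄ + ε) / (2 * c))) (le_max_right (0 : ℝ) _)
      linarith
    · have := le_trans (le_max_right ((a₄ - ε) / (2 * c) - s ^ 2 * deriv h s)
        (s ^ 2 * deriv h s - (a₄ + ε) / (2 * c))) (le_max_right (0 : ℝ) _)
      linarith
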